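/- Let Γ be a ℤ^d-periodic graph with fundamental domain W = [n]. Let w ∈ ℤ^{d+1}, w ≠ 0, be such that the face N_w identified by w is a proper face of the generic Newton polytope N = N(D(z,λ)), and let m = min_{a ∈ A(D(z,λ))} w·a. Then for any fixed labeling (v,e) and any permutation σ of [n], σD(z,λ) contains no term of weight less than m with respect to w; that is, every exponent vector a in the support of σD(z,λ) satisfies w·a ≥ m. -/

import Mathlib

open scoped Classical Polynomial

noncomputable section

/-- A `ℤ^d`-periodic graph (with no self-loops or multiple edges), given by a
fundamental domain `[n] = Fin n` together with, for each pair `i j` of vertices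
of the fundamental domain, the finite set `edges i j ⊆ ℤ^d` of those `a` such
that there is an edge between the vertex `(i,0)` and the vertex `(j,a)`.
The full vertex set is `Fin n × ℤ^d`, with `ℤ^d` acting by translation on the
second coordinate. -/
structure PeriodicGraph (d n : ℕ) where
  edges : Fin n → Fin n → Finset (Fin d → ℤ)
  symm : ∀ i j a, a ∈ edges i j ↔ -a ∈ edges j i
  no_loop : ∀ i, (0 : Fin d → ℤ) ∉ edges i i

namespace PeriodicGraph

variable {d n : ℕ}

/-- Vertices of the periodic graph: pairs `(i, a)` with `i` in the fundamental
domain and `a ∈ ℤ^d`. -/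
abbrev Vertex (d n : ℕ) := Fin n × (Fin d → ℤ)

/-- Adjacency in the full `ℤ^d`-periodic graph. -/
def Adj (G : PeriodicGraph d n) (u v : Vertex d n) : Prop :=
  (v.2 - u.2) ∈ G.edges u.1 v.1

/-- The periodic graph is connected. -/
def Connected (G : PeriodicGraph d n) : Prop :=
  ∀ u v : Vertex d n, Relation.ReflTransGen G.Adj u v

/-- Directed edges (up to translation): triples `(i, j, a)` so that there is an
edge from `(i,0)` to `(j,a)`. -/
def DirEdge (G : PeriodicGraph d n) : Type :=
  {x : Fin n × Fin n × (Fin d → ℤ) // x.2.2 ∈ G.edges x.1 x.2.1}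

/-- Reversal of a directed edge. -/
def flipEdge (G : PeriodicGraph d n) (x : G.DirEdge) : G.DirEdge :=
  ⟨(x.1.2.1, x.1.1, -x.1.2.2), (G.symm _ _ _).mp x.2⟩

lemma flipEdge_flipEdge (G : PeriodicGraph d n) (x : G.DirEdge) :
    G.flipEdge (G.flipEdge x) = x := by
  obtain ⟨⟨i, j, a⟩, hx⟩ := x
  simp [flipEdge] <;> rfl

/-- The setoid identifying a directed edge with its reversal; an (undirected)
edge label variable `e_{(i,j),a} = e_{(j,i),-a}` corresponds to an equivalence
class. -/
def edgeSetoid (G : PeriodicGraph d n) : Setoid G.DirEdge where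
  r x y := y = x ∨ y = G.flipEdge x
  iseqv := by
    constructor
    · intro x; exact Or.inl rfl
    · rintro x y (rfl | rfl)
      · exact Or.inl rfl
      · right; rw [flipEdge_flipEdge]
    · rintro x y z (rfl | rfl) h
      · exact h
      · rcases h with rfl | rfl
        · exact Or.inr rfl
        · left; rw [flipEdge_flipEdge]

/-- Edge-label variables: unordered edges of the quotient graph. -/
abbrev EdgeVar (G : PeriodicGraph d n) : Type := Quotient G.edgeSetoid

/-- The index type for the variables of the labeling space `ℂ^{V,E}`:
one potential variable `v_i` for each vertex `i` of the fundamental domain,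
and one edge-label variable for each (undirected) edge of the quotient. -/
abbrev VarIdx (G : PeriodicGraph d n) : Type := Fin n ⊕ G.EdgeVar

/-- The labeling space `ℂ^{V,E}`. -/
abbrev Labeling (G : PeriodicGraph d n) : Type := G.VarIdx → ℂ

/-- The edge variable attached to a directed edge. -/
def edgeVar (G : PeriodicGraph d n) (i j : Fin n) (a : Fin d → ℤ)
    (h : a ∈ G.edges i j) : G.VarIdx :=
  Sum.inr (Quotient.mk G.edgeSetoid ⟨(i, j, a), h⟩)

/-- The ring `ℂ[z^{±1}]` of complex Laurent polynomials in `z = (z_1,…,z_d)`. -/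
abbrev LaurentC (d : ℕ) : Type := AddMonoidAlgebra ℂ (Fin d → ℤ)

/-- The universal coefficient ring `ℂ[v,e]`: polynomials in the potential and
edge-label variables. -/
abbrev CoeffRing (G : PeriodicGraph d n) : Type := MvPolynomial G.VarIdx ℂ

/-- Laurent polynomials in `z` with coefficients in `ℂ[v,e]`. -/
abbrev LaurentU (G : PeriodicGraph d n) : Type :=
  AddMonoidAlgebra G.CoeffRing (Fin d → ℤ)

/-- The Floquet matrix `L(z)` at a fixed labeling `x ∈ ℂ^{V,E}`:
`L(z)_{i,j} = δ_{ij} v_i + ∑_{a : (i,j+a) ∈ ℰ} e_{(i,j),a} z^a`. -/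
def floquet (G : PeriodicGraph d n) (x : G.Labeling) :
    Matrix (Fin n) (Fin n) (LaurentC d) := fun i j =>
  (if i = j then AddMonoidAlgebra.single 0 (x (Sum.inl i)) else 0) +
    ∑ a ∈ (G.edges i j).attach,
      AddMonoidAlgebra.single a.1 (x (G.edgeVar i j a.1 a.2))

/-- The universal Floquet matrix `L(z)`, with the potentials and edge labels
treated as indeterminates. -/
def floquetU (G : PeriodicGraph d n) :
    Matrix (Fin n) (Fin n) G.LaurentU := fun i j =>
  (if i = j then AddMonoidAlgebra.single 0 (MvPolynomial.X (Sum.inl i)) else 0) +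
    ∑ a ∈ (G.edges i j).attach,
      AddMonoidAlgebra.single a.1 (MvPolynomial.X (G.edgeVar i j a.1 a.2))

/-- The matrix `L(z) - λ I` at a fixed labeling, as a matrix of polynomials in
`λ` over `ℂ[z^{±1}]`. -/
def dispMat (G : PeriodicGraph d n) (x : G.Labeling) :
    Matrix (Fin n) (Fin n) (Polynomial (LaurentC d)) := fun i j =>
  Polynomial.C (G.floquet x i j) - if i = j then Polynomial.X else 0

/-- The universal matrix `L(z) - λ I`. -/
def dispMatU (G : PeriodicGraph d n) :
    Matrix (Fin n) (Fin n) (Polynomial G.LaurentU) := fun i j =>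
  Polynomial.C (G.floquetU i j) - if i = j then Polynomial.X else 0

/-- The dispersion polynomial `D(z,λ) = det (L(z) - λ I)` at a fixed
labeling, an element of `ℂ[z^{±1}][λ]`. -/
def disp (G : PeriodicGraph d n) (x : G.Labeling) : Polynomial (LaurentC d) :=
  (G.dispMat x).det

/-- The universal dispersion polynomial `D(v,e,z,λ) = det (L(z) - λ I)`,
an element of `ℂ[v,e][z^{±1}][λ]`. -/
def dispU (G : PeriodicGraph d n) : Polynomial G.LaurentU :=
  G.dispMatU.det

/-- `σD(z,λ) = ∏ i, (L(z) - λI)_{i, σ(i)}` at a fixed labeling. -/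
def permProd (G : PeriodicGraph d n) (x : G.Labeling) (σ : Equiv.Perm (Fin n)) :
    Polynomial (LaurentC d) :=
  ∏ i, G.dispMat x i (σ i)

/-- The universal `σD(v,e,z,λ) = ∏ i, (L(z) - λI)_{i, σ(i)}`. -/
def permProdU (G : PeriodicGraph d n) (σ : Equiv.Perm (Fin n)) :
    Polynomial G.LaurentU :=
  ∏ i, G.dispMatU i (σ i)

/-- The support `𝒜(g) ⊆ ℤ^d × ℕ` of `g ∈ ℂ[z^{±1}][λ]`: the set of pairs
`(a, b)` such that the monomial `z^a λ^b` has nonzero coefficient. -/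
def suppC (g : Polynomial (LaurentC d)) : Set ((Fin d → ℤ) × ℕ) :=
  {p | AddMonoidAlgebra.coeff (g.coeff p.2) p.1 ≠ 0}

/-- The generic support `A(f) ⊆ ℤ^d × ℕ` of `f ∈ ℂ[v,e][z^{±1}][λ]`: the set
of `(a,b)` such that the coefficient `c_{a,b}(v,e)` of `z^a λ^b` is a nonzero
polynomial in `(v,e)` (equivalently, such that `(a,b)` is in the support of the
specialization of `f` at a generic labeling). -/
def genSupp {G : PeriodicGraph d n} (f : Polynomial G.LaurentU) :
    Set ((Fin d → ℤ) × ℕ) :=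
  {p | AddMonoidAlgebra.coeff (f.coeff p.2) p.1 ≠ 0}

/-- The full support `𝒜(f) ⊆ ℤ^d × ℕ × ℕ^{V,E}` of `f ∈ ℂ[v,e][z^{±1}][λ]`
as a polynomial in all the variables `z, λ, v, e`: the set of triples
`(r₁, r₂, r₃)` such that the monomial `z^{r₁} λ^{r₂} (v,e)^{r₃}` appears in `f`
with nonzero coefficient. -/
def fullSupp {G : PeriodicGraph d n} (f : Polynomial G.LaurentU) :
    Set ((Fin d → ℤ) × ℕ × (G.VarIdx →₀ ℕ)) :=
  {r | MvPolynomial.coeff r.2.2 (AddMonoidAlgebra.coeff (f.coeff r.2.1) r.1) ≠ 0}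

/-- The embedding `ℤ^d × ℕ → ℝ^{d+1}` of exponent vectors. -/
def toPt (p : (Fin d → ℤ) × ℕ) : (Fin d → ℝ) × ℝ :=
  (fun i => (p.1 i : ℝ), (p.2 : ℝ))

/-- The generic Newton polytope `N(f) ⊆ ℝ^{d+1}` of `f ∈ ℂ[v,e][z^{±1}][λ]`:
the convex hull of the generic support. -/
def newton {G : PeriodicGraph d n} (f : Polynomial G.LaurentU) :
    Set ((Fin d → ℝ) × ℝ) :=
  convexHull ℝ (toPt '' genSupp f)

/-- The pairing `w · p` of a weight `w ∈ ℤ^{d+1}` with an exponent vector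
`p ∈ ℤ^d × ℕ`. -/
def dotZ (w : (Fin d → ℤ) × ℤ) (p : (Fin d → ℤ) × ℕ) : ℤ :=
  (∑ i, w.1 i * p.1 i) + w.2 * (p.2 : ℤ)

/-- The pairing `w · q` of a weight `w ∈ ℤ^{d+1}` with a point `q ∈ ℝ^{d+1}`. -/
def dotR (w : (Fin d → ℤ) × ℤ) (q : (Fin d → ℝ) × ℝ) : ℝ :=
  (∑ i, (w.1 i : ℝ) * q.1 i) + (w.2 : ℝ) * q.2

/-- The face `N(f)_w` of the generic Newton polytope identified by the weight
`w`: the set of points of `N(f)` on which `w · ·` is minimized. -/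
def face {G : PeriodicGraph d n} (f : Polynomial G.LaurentU)
    (w : (Fin d → ℤ) × ℤ) : Set ((Fin d → ℝ) × ℝ) :=
  {q ∈ newton f | ∀ q' ∈ newton f, dotR w q ≤ dotR w q'}

/-- A set in `ℝ^{d+1}` is vertical if it contains two points `(a,b)` and
`(a,c)` with `b ≠ c`. -/
def IsVertical (F : Set ((Fin d → ℝ) × ℝ)) : Prop :=
  ∃ (a : Fin d → ℝ) (b c : ℝ), b ≠ c ∧ (a, b) ∈ F ∧ (a, c) ∈ F

/-- A set in `ℝ^{d+1}` is a vertical segment if it is a (one-dimensional)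
segment and is vertical. -/
def IsVerticalSegment (F : Set ((Fin d → ℝ) × ℝ)) : Prop :=
  (∃ p q : (Fin d → ℝ) × ℝ, p ≠ q ∧ F = segment ℝ p q) ∧ IsVertical F

/-- `U ⊆ [n]` is a component of the fundamental domain: no edge of `Γ` joins
the `ℤ^d`-orbit of `U` to the `ℤ^d`-orbit of its complement. -/
def IsComponent (G : PeriodicGraph d n) (U : Set (Fin n)) : Prop :=
  ∀ i ∈ U, ∀ j, j ∉ U → G.edges i j = ∅

/-- A fundamental domain of `Γ` is determined by shifts `t i ∈ ℤ^d` of the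
vertices of the standard fundamental domain (it is `{(i, t i) : i ∈ [n]}`).
`SupportZeroOn G t U` says that the subset `{(i, t i) : i ∈ U}` of that
fundamental domain has support `0`: every edge between the orbits of vertices
of `U` joins `(i, t i)` to `(j, t j)` with shift `a = 0`. -/
def SupportZeroOn (G : PeriodicGraph d n) (t : Fin n → (Fin d → ℤ))
    (U : Set (Fin n)) : Prop :=
  ∀ i ∈ U, ∀ j ∈ U, ∀ a ∈ G.edges i j, a = t j - t i

/-- `Γ` has a fundamental domain of support `0`. -/
def HasSupportZeroFD (G : PeriodicGraph d n) : Prop :=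
  ∃ t : Fin n → (Fin d → ℤ), G.SupportZeroOn t Set.univ

/-- `Γ` has a fundamental domain with a nonempty component of support `0`. -/
def HasSupportZeroComponent (G : PeriodicGraph d n) : Prop :=
  ∃ (t : Fin n → (Fin d → ℤ)) (U : Set (Fin n)),
    U.Nonempty ∧ G.IsComponent U ∧ G.SupportZeroOn t U

/-- A subset of the labeling space `ℂ^{V,E}` is algebraic if it is the common
zero locus of a family of polynomials in the variables `(v,e)`. -/
def IsAlgebraicSet {ι : Type*} (S : Set (ι → ℂ)) : Prop :=
  ∃ P : Set (MvPolynomial ι ℂ), S = {x | ∀ p ∈ P, MvPolynomial.eval x p = 0}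

/-- A property of labelings holds generically if it holds outside some proper
algebraic subset of the labeling space (i.e., on a nonempty Zariski-open set). -/
def Generic {ι : Type*} (P : (ι → ℂ) → Prop) : Prop :=
  ∃ S : Set (ι → ℂ), IsAlgebraicSet S ∧ S ≠ Set.univ ∧ ∀ x ∉ S, P x

/-- `g ∈ ℂ[z^{±1}][λ]` has a linear factor in `λ`. -/
def HasLinearFactor (g : Polynomial (LaurentC d)) : Prop :=
  ∃ lam : ℂ, (Polynomial.X - Polynomial.C (algebraMap ℂ (LaurentC d) lam)) ∣ g



/-- The dispersion polynomial `D|_U(z,λ) = det (L|_U(z) - λI)` of the induced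
periodic operator on the induced subgraph `Γ_U`, for `U ⊆ [n]`, at a fixed
labeling (the Floquet matrix of the induced operator is the corresponding
principal submatrix of `L(z)`). -/
def dispSub (G : PeriodicGraph d n) (x : G.Labeling) (U : Finset (Fin n)) :
    Polynomial (LaurentC d) :=
  (Matrix.det (fun i j : {i // i ∈ U} =>
    Polynomial.C (G.floquet x i.1 j.1) - if i = j then Polynomial.X else 0))

/-- Restriction of a Laurent polynomial to the monomials satisfying a
predicate. -/
def laurFilter (p : (Fin d → ℤ) → Prop) (g : LaurentC d) : LaurentC d :=
  AddMonoidAlgebra.ofCoeff (Finsupp.filter p (AddMonoidAlgebra.coeff g))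

/-- The facial polynomial `g_w` of `g ∈ ℂ[z^{±1}][λ]`: the sum of the terms of
`g` whose exponent vectors minimize `w · ·` over the support of `g`. -/
def facialC (w : (Fin d → ℤ) × ℤ) (g : Polynomial (LaurentC d)) :
    Polynomial (LaurentC d) :=
  ∑ b ∈ g.support,
    Polynomial.C (laurFilter
      (fun a => ∀ q ∈ suppC g, dotZ w (a, b) ≤ dotZ w q) (g.coeff b)) *
      Polynomial.X ^ b

/-- The monomial `z^a` in `ℂ[z^{±1}]`. -/
def zMon (a : Fin d → ℤ) : LaurentC d := AddMonoidAlgebra.single a 1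

/-- The Sylvester matrix of two polynomials `f, g ∈ R[λ]` (with respect to
their natural degrees `s = deg f` and `t = deg g`): a `(t+s) × (t+s)` matrix
whose first `t` rows are the shifted coefficient sequences of `f` and whose
last `s` rows are the shifted coefficient sequences of `g`. -/
def sylvester {R : Type*} [CommRing R] (f g : Polynomial R) :
    Matrix (Fin (g.natDegree + f.natDegree)) (Fin (g.natDegree + f.natDegree)) R :=
  fun r c =>
    if (r : ℕ) < g.natDegree then
      (if (r : ℕ) ≤ (c : ℕ) then f.coeff ((c : ℕ) - (r : ℕ)) else 0)
    else
      (if ((r : ℕ) - g.natDegree) ≤ (c : ℕ) then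
        g.coeff ((c : ℕ) - ((r : ℕ) - g.natDegree)) else 0)

/-- The resultant of two polynomials in `λ`: the determinant of their
Sylvester matrix. -/
def resultant {R : Type*} [CommRing R] (f g : Polynomial R) : R :=
  (sylvester f g).det

/-- The simplified quotient graph `S(Γ/ℤ^d)`: the finite simple graph on the
fundamental domain `[n]` with an edge between `i ≠ j` whenever some edge of `Γ`
joins the orbits of `i` and `j`. -/
def simpleQuotient (G : PeriodicGraph d n) : SimpleGraph (Fin n) where
  Adj i j := i ≠ j ∧ (G.edges i j).Nonempty
  symm := ⟨by
    rintro i j ⟨hij, a, ha⟩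
    exact ⟨hij.symm, ⟨-a, (G.symm i j a).mp ha⟩⟩⟩
  loopless := ⟨fun i h => h.1 rfl⟩

/-- A property of potentials `(v_1,…,v_n) ∈ ℂ^n` holds generically if it holds
outside a proper algebraic subset of `ℂ^n`. -/
def GenericPot (P : (Fin n → ℂ) → Prop) : Prop :=
  ∃ S : Set (Fin n → ℂ), IsAlgebraicSet S ∧ S ≠ Set.univ ∧ ∀ x ∉ S, P x

end PeriodicGraph


namespace PeriodicGraph

variable {d n : ℕ}

/-- Exponent data for one monomial `z^a λ^b (v,e)^μ`. -/
abbrev Mon (G : PeriodicGraph d n) : Type := (Fin d → ℤ) × ℕ × (G.VarIdx →₀ ℕ)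

/-- The monomial `z^{r.1} λ^{r.2.1} (v,e)^{r.2.2}` in `ℂ[v,e][z^{±1}][λ]`. -/
def mono (G : PeriodicGraph d n) (r : G.Mon) : Polynomial G.LaurentU :=
  Polynomial.C (AddMonoidAlgebra.single r.1 (MvPolynomial.monomial r.2.2 1)) *
    Polynomial.X ^ r.2.1

/-- The coefficient of the monomial `mono r` in `f`. -/
def co (G : PeriodicGraph d n) (r : G.Mon) (f : Polynomial G.LaurentU) : ℂ :=
  MvPolynomial.coeff r.2.2 (AddMonoidAlgebra.coeff (f.coeff r.2.1) r.1)

lemma mono_zero (G : PeriodicGraph d n) : G.mono 0 = 1 := by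
  simp [mono, MvPolynomial.monomial_zero', map_one]
  rfl

lemma mono_add (G : PeriodicGraph d n) (r s : G.Mon) :
    G.mono (r + s) = G.mono r * G.mono s := by
  unfold mono
  rw [show (r + s).1 = r.1 + s.1 from rfl, show (r + s).2.1 = r.2.1 + s.2.1 from rfl,
    show (r + s).2.2 = r.2.2 + s.2.2 from rfl]
  rw [pow_add]
  have h1 : (MvPolynomial.monomial (r.2.2 + s.2.2)) (1 : ℂ)
      = MvPolynomial.monomial r.2.2 1 * MvPolynomial.monomial s.2.2 1 := by
    rw [MvPolynomial.monomial_mul, one_mul]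
  rw [h1, ← AddMonoidAlgebra.single_mul_single, map_mul]
  ring

lemma co_zero (G : PeriodicGraph d n) (r : G.Mon) : G.co r 0 = 0 := by
  simp [co]

lemma co_add (G : PeriodicGraph d n) (r : G.Mon) (f g : Polynomial G.LaurentU) :
    G.co r (f + g) = G.co r f + G.co r g := by
  unfold co
  rw [Polynomial.coeff_add]
  rw [show AddMonoidAlgebra.coeff ((f.coeff r.2.1 + g.coeff r.2.1 : G.LaurentU)) r.1
    = AddMonoidAlgebra.coeff (f.coeff r.2.1) r.1 + AddMonoidAlgebra.coeff (g.coeff r.2.1) r.1 from rfl]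
  exact MvPolynomial.coeff_add _ _ _

lemma co_sum (G : PeriodicGraph d n) (r : G.Mon) {ι : Type*} (s : Finset ι)
    (f : ι → Polynomial G.LaurentU) :
    G.co r (∑ i ∈ s, f i) = ∑ i ∈ s, G.co r (f i) := by
  induction s using Finset.cons_induction with
  | empty => simpa using G.co_zero r
  | cons a s ha ih => rw [Finset.sum_cons, Finset.sum_cons, G.co_add, ih]

lemma co_zsmul (G : PeriodicGraph d n) (r : G.Mon) (c : ℤ) (f : Polynomial G.LaurentU) :
    G.co r (c • f) = c • G.co r f := by
  unfold co
  rw [Polynomial.coeff_smul]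
  rw [show AddMonoidAlgebra.coeff ((c • f.coeff r.2.1 : G.LaurentU)) r.1 = c • AddMonoidAlgebra.coeff (f.coeff r.2.1) r.1 from rfl]
  exact MvPolynomial.coeff_smul _ _ _

lemma co_mono (G : PeriodicGraph d n) (r s : G.Mon) :
    G.co r (G.mono s) = if r = s then 1 else 0 := by
  unfold co mono
  rw [Polynomial.C_mul_X_pow_eq_monomial, Polynomial.coeff_monomial]
  by_cases h1 : s.2.1 = r.2.1
  · rw [if_pos h1]
    rw [show AddMonoidAlgebra.coeff ((AddMonoidAlgebra.single s.1 (MvPolynomial.monomial s.2.2 1) : G.LaurentU)) r.1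
      = if s.1 = r.1 then MvPolynomial.monomial s.2.2 1 else 0 from Finsupp.single_apply]
    by_cases h2 : s.1 = r.1
    · rw [if_pos h2, MvPolynomial.coeff_monomial]
      by_cases h3 : s.2.2 = r.2.2
      · rw [if_pos h3, if_pos]
        exact Prod.ext h2.symm (Prod.ext h1.symm h3.symm)
      · rw [if_neg h3, if_neg]
        intro h; exact h3 (congrArg (fun t => t.2.2) h).symm
    · rw [if_neg h2]
      rw [show MvPolynomial.coeff r.2.2 (0 : MvPolynomial G.VarIdx ℂ) = 0 from rfl, if_neg]
      intro h; exact h2 (congrArg (fun t => t.1) h).symm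
  · rw [if_neg h1]
    rw [show AddMonoidAlgebra.coeff ((0 : G.LaurentU)) r.1 = 0 from rfl,
      show MvPolynomial.coeff r.2.2 (0 : MvPolynomial G.VarIdx ℂ) = 0 from rfl, if_neg]
    intro h; exact h1 (congrArg (fun t => t.2.1) h).symm

end PeriodicGraph
namespace PeriodicGraph

variable {d n : ℕ}

/-- Index type for the terms of the entry `(i,j)` of `L(z) - λI`. -/
abbrev TIx (G : PeriodicGraph d n) (i j : Fin n) : Type :=
  Bool ⊕ {a : Fin d → ℤ // a ∈ G.edges i j}

/-- The set of terms of the entry `(i,j)`: `-λ` and `v_i` (if `i = j`) and the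
edge terms. -/
def tset (G : PeriodicGraph d n) (i j : Fin n) : Finset (G.TIx i j) :=
  (if i = j then ({Sum.inl true, Sum.inl false} : Finset (G.TIx i j)) else ∅) ∪
    (G.edges i j).attach.map ⟨Sum.inr, Sum.inr_injective⟩

/-- The exponent data of a term. -/
def texp (G : PeriodicGraph d n) (i j : Fin n) : G.TIx i j → G.Mon
  | Sum.inl true => (0, 1, 0)
  | Sum.inl false => (0, 0, Finsupp.single (Sum.inl i) 1)
  | Sum.inr a => (a.1, 0, Finsupp.single (G.edgeVar i j a.1 a.2) 1)

/-- The sign of a term (`-1` for the `-λ` term). -/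
def tsgn (G : PeriodicGraph d n) (i j : Fin n) : G.TIx i j → ℤ
  | Sum.inl true => -1
  | _ => 1

/-- The value of a term. -/
def tval (G : PeriodicGraph d n) (i j : Fin n) (t : G.TIx i j) : Polynomial G.LaurentU :=
  G.tsgn i j t • G.mono (G.texp i j t)

lemma tval_inl_true (G : PeriodicGraph d n) (i j : Fin n) :
    G.tval i j (Sum.inl true) = -Polynomial.X := by
  unfold tval
  rw [show G.tsgn i j (Sum.inl true) = -1 from rfl,
    show G.texp i j (Sum.inl true) = ((0 : Fin d → ℤ), 1, (0 : G.VarIdx →₀ ℕ)) from rfl]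
  unfold mono
  rw [MvPolynomial.monomial_zero', map_one, ← AddMonoidAlgebra.one_def, map_one, pow_one,
    one_mul]
  exact neg_one_zsmul (Polynomial.X : Polynomial G.LaurentU)

lemma tval_inl_false (G : PeriodicGraph d n) (i j : Fin n) :
    G.tval i j (Sum.inl false) =
      Polynomial.C (AddMonoidAlgebra.single 0 (MvPolynomial.X (Sum.inl i))) := by
  unfold tval
  rw [show G.tsgn i j (Sum.inl false) = 1 from rfl,
    show G.texp i j (Sum.inl false)
      = ((0 : Fin d → ℤ), 0, Finsupp.single (Sum.inl i : G.VarIdx) 1) from rfl, one_smul]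
  unfold mono
  rw [pow_zero, mul_one]
  rfl

lemma tval_inr (G : PeriodicGraph d n) (i j : Fin n) (a : {a : Fin d → ℤ // a ∈ G.edges i j}) :
    G.tval i j (Sum.inr a) =
      Polynomial.C (AddMonoidAlgebra.single a.1 (MvPolynomial.X (G.edgeVar i j a.1 a.2))) := by
  unfold tval
  rw [show G.tsgn i j (Sum.inr a) = 1 from rfl,
    show G.texp i j (Sum.inr a)
      = (a.1, 0, Finsupp.single (G.edgeVar i j a.1 a.2) 1) from rfl, one_smul]
  unfold mono
  rw [pow_zero, mul_one]
  rfl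

lemma entry_eq (G : PeriodicGraph d n) (i j : Fin n) :
    G.dispMatU i j = ∑ t ∈ G.tset i j, G.tval i j t := by
  have hdisj : Disjoint
      (if i = j then ({Sum.inl true, Sum.inl false} : Finset (G.TIx i j)) else ∅)
      ((G.edges i j).attach.map ⟨Sum.inr, Sum.inr_injective⟩) := by
    rw [Finset.disjoint_left]
    intro t ht ht'
    obtain ⟨a, _, ha⟩ := Finset.mem_map.mp ht'
    split_ifs at ht with h
    · rcases Finset.mem_insert.mp ht with rfl | ht2
      · exact Sum.inr_ne_inl ha
      · rw [Finset.mem_singleton] at ht2; subst ht2; exact Sum.inr_ne_inl ha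
    · exact absurd ht (Finset.notMem_empty t)
  unfold tset
  rw [Finset.sum_union hdisj, Finset.sum_map]
  by_cases h : i = j
  · subst h
    rw [if_pos rfl]
    rw [show ∑ x ∈ ({Sum.inl true, Sum.inl false} : Finset (G.TIx i i)), G.tval i i x
        = G.tval i i (Sum.inl true) + G.tval i i (Sum.inl false) from
      Finset.sum_pair (fun hcon =>
        Bool.noConfusion (Sum.inl.inj (hcon : (Sum.inl true : Bool ⊕ {a : Fin d → ℤ // a ∈ G.edges i i}) = Sum.inl false)))]
    rw [G.tval_inl_true, G.tval_inl_false]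
    unfold dispMatU floquetU
    rw [if_pos rfl, if_pos rfl]
    simp only [Function.Embedding.coeFn_mk, tval_inr]
    rw [map_add, map_sum]
    ring
  · rw [if_neg h]
    unfold dispMatU floquetU
    rw [if_neg h, if_neg h]
    simp only [Function.Embedding.coeFn_mk, tval_inr]
    rw [Finset.sum_empty, zero_add, zero_add, map_sum]
    ring

end PeriodicGraph
namespace PeriodicGraph

variable {d n : ℕ}

lemma prod_smul_mono (G : PeriodicGraph d n) {ι : Type*} (s : Finset ι) (c : ι → ℤ)
    (g : ι → G.Mon) :
    ∏ x ∈ s, (c x • G.mono (g x)) = (∏ x ∈ s, c x) • G.mono (∑ x ∈ s, g x) := by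
  induction s using Finset.cons_induction with
  | empty => rw [Finset.prod_empty, Finset.prod_empty, Finset.sum_empty, G.mono_zero, one_smul]
  | cons a s ha ih =>
    rw [Finset.prod_cons, Finset.prod_cons, Finset.sum_cons, ih, G.mono_add,
      smul_mul_assoc, mul_smul_comm, smul_smul]

/-- The set of choices of one term per row, for the permutation `σ`. -/
def choices (G : PeriodicGraph d n) (σ : Equiv.Perm (Fin n)) :
    Finset (∀ i ∈ (Finset.univ : Finset (Fin n)), G.TIx i (σ i)) :=
  Finset.univ.pi (fun i => G.tset i (σ i))

/-- Total exponent of a choice. -/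
def tot (G : PeriodicGraph d n) (σ : Equiv.Perm (Fin n))
    (p : ∀ i ∈ (Finset.univ : Finset (Fin n)), G.TIx i (σ i)) : G.Mon :=
  ∑ x ∈ Finset.univ.attach, G.texp x.1 (σ x.1) (p x.1 x.2)

/-- Total sign of a choice. -/
def sg (G : PeriodicGraph d n) (σ : Equiv.Perm (Fin n))
    (p : ∀ i ∈ (Finset.univ : Finset (Fin n)), G.TIx i (σ i)) : ℤ :=
  ∏ x ∈ Finset.univ.attach, G.tsgn x.1 (σ x.1) (p x.1 x.2)

lemma permProdU_expand (G : PeriodicGraph d n) (σ : Equiv.Perm (Fin n)) :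
    G.permProdU σ = ∑ p ∈ G.choices σ, G.sg σ p • G.mono (G.tot σ p) := by
  unfold permProdU
  calc (∏ i, G.dispMatU i (σ i))
      = ∏ i ∈ Finset.univ, ∑ t ∈ G.tset i (σ i), G.tval i (σ i) t :=
        Finset.prod_congr rfl (fun i _ => G.entry_eq i (σ i))
    _ = ∑ p ∈ Finset.univ.pi (fun i => G.tset i (σ i)), ∏ x ∈ Finset.univ.attach,
          G.tval x.1 (σ x.1) (p x.1 x.2) :=
            Finset.prod_sum Finset.univ (fun i => G.tset i (σ i)) (fun i t => G.tval i (σ i) t)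
    _ = _ := by
        refine Finset.sum_congr rfl (fun p _ => ?_)
        simp only [tval]
        exact G.prod_smul_mono _ _ _

/-- The number of choices for `σ` with total exponent `r`. -/
def ncount (G : PeriodicGraph d n) (σ : Equiv.Perm (Fin n)) (r : G.Mon) : ℕ :=
  ((G.choices σ).filter (fun p => G.tot σ p = r)).card

lemma tsgn_eq (G : PeriodicGraph d n) (i j : Fin n) (t : G.TIx i j) :
    G.tsgn i j t = (-1 : ℤ) ^ ((G.texp i j t).2.1) := by
  rcases t with b | a
  · rcases b with _ | _ <;> simp [tsgn, texp]
  · simp [tsgn, texp]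

lemma sg_eq (G : PeriodicGraph d n) (σ : Equiv.Perm (Fin n))
    (p : ∀ i ∈ (Finset.univ : Finset (Fin n)), G.TIx i (σ i)) :
    G.sg σ p = (-1 : ℤ) ^ ((G.tot σ p).2.1) := by
  unfold sg tot
  rw [show ((∑ x ∈ Finset.univ.attach, G.texp x.1 (σ x.1) (p x.1 x.2)).2.1)
      = ∑ x ∈ Finset.univ.attach, (G.texp x.1 (σ x.1) (p x.1 x.2)).2.1 by
    rw [Prod.snd_sum, Prod.fst_sum]]
  rw [← Finset.prod_pow_eq_pow_sum]
  exact Finset.prod_congr rfl (fun x _ => G.tsgn_eq _ _ _)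

lemma co_permProdU (G : PeriodicGraph d n) (σ : Equiv.Perm (Fin n)) (r : G.Mon) :
    G.co r (G.permProdU σ) = (-1 : ℂ) ^ r.2.1 * (G.ncount σ r : ℂ) := by
  rw [G.permProdU_expand σ, G.co_sum]
  have hterm : ∀ p ∈ G.choices σ, G.co r (G.sg σ p • G.mono (G.tot σ p))
      = if G.tot σ p = r then (-1 : ℂ) ^ r.2.1 else 0 := by
    intro p _
    rw [G.co_zsmul, G.co_mono]
    by_cases h : G.tot σ p = r
    · rw [if_pos h, if_pos h.symm, G.sg_eq σ p, h]
      rw [zsmul_eq_mul, mul_one]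
      push_cast
      ring
    · rw [if_neg h, if_neg (fun hh => h hh.symm), smul_zero]
  rw [Finset.sum_congr rfl hterm, ← Finset.sum_filter]
  rw [Finset.sum_const, nsmul_eq_mul]
  unfold ncount
  ring

end PeriodicGraph
namespace PeriodicGraph

variable {d n : ℕ}

lemma dispU_expand (G : PeriodicGraph d n) :
    G.dispU = ∑ σ : Equiv.Perm (Fin n), (Equiv.Perm.sign σ : ℤ) • G.permProdU σ := by
  unfold dispU
  rw [← Matrix.det_transpose, Matrix.det_apply]
  refine Finset.sum_congr rfl (fun σ _ => ?_)
  rw [Units.smul_def]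
  rfl

lemma co_dispU (G : PeriodicGraph d n) (r : G.Mon) :
    G.co r G.dispU = ∑ σ : Equiv.Perm (Fin n),
      (Equiv.Perm.sign σ : ℤ) • ((-1 : ℂ) ^ r.2.1 * (G.ncount σ r : ℂ)) := by
  rw [G.dispU_expand, G.co_sum]
  exact Finset.sum_congr rfl (fun σ _ => by rw [G.co_zsmul, G.co_permProdU])

lemma co_dispU_ne_zero (G : PeriodicGraph d n) (r : G.Mon) (σ0 : Equiv.Perm (Fin n))
    (h0 : G.ncount σ0 r ≠ 0)
    (huni : ∀ τ, G.ncount τ r ≠ 0 → Equiv.Perm.sign τ = Equiv.Perm.sign σ0) :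
    G.co r G.dispU ≠ 0 := by
  rw [G.co_dispU]
  have hcong : ∀ τ ∈ (Finset.univ : Finset (Equiv.Perm (Fin n))),
      (Equiv.Perm.sign τ : ℤ) • ((-1 : ℂ) ^ r.2.1 * (G.ncount τ r : ℂ))
        = (Equiv.Perm.sign σ0 : ℤ) • ((-1 : ℂ) ^ r.2.1 * (G.ncount τ r : ℂ)) := by
    intro τ _
    by_cases h : G.ncount τ r = 0
    · rw [h]; norm_num
    · rw [huni τ h]
  rw [Finset.sum_congr rfl hcong, ← Finset.smul_sum, ← Finset.mul_sum]
  have hS : (∑ τ : Equiv.Perm (Fin n), (G.ncount τ r : ℂ))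
      = ((∑ τ : Equiv.Perm (Fin n), G.ncount τ r : ℕ) : ℂ) := by push_cast; ring
  rw [hS]
  have hSne : (∑ τ : Equiv.Perm (Fin n), G.ncount τ r) ≠ 0 := by
    intro hzero
    exact h0 ((Finset.sum_eq_zero_iff.mp hzero) σ0 (Finset.mem_univ σ0))
  rw [zsmul_eq_mul]
  apply mul_ne_zero
  · exact Int.cast_ne_zero.mpr (Units.ne_zero _)
  · exact mul_ne_zero (pow_ne_zero _ (neg_ne_zero.mpr one_ne_zero))
      (Nat.cast_ne_zero.mpr hSne)

end PeriodicGraph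
open Equiv in
theorem PeriodicGraph.sign_eq_of_sameCycle {α : Type*} [DecidableEq α] [Fintype α]
    (σ τ : Equiv.Perm α) (hs : σ.support = τ.support)
    (hc : ∀ x y, σ.SameCycle x y ↔ τ.SameCycle x y) :
    Equiv.Perm.sign σ = Equiv.Perm.sign τ := by
  have key : ∀ x : α, (σ.cycleOf x).support = (τ.cycleOf x).support := by
    intro x
    ext z
    rw [Equiv.Perm.mem_support_cycleOf_iff, Equiv.Perm.mem_support_cycleOf_iff, hc, hs]
  have hsignprod : ∀ ρ : Equiv.Perm α,
      Equiv.Perm.sign ρ = ∏ c ∈ ρ.cycleFactorsFinset, Equiv.Perm.sign c := by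
    intro ρ
    conv_lhs => rw [← Equiv.Perm.cycleFactorsFinset_noncommProd ρ]
    rw [Finset.map_noncommProd, Finset.noncommProd_eq_prod]
    rfl
  have hne : ∀ {ρ : Equiv.Perm α} (c : Equiv.Perm α),
      c ∈ ρ.cycleFactorsFinset → c.support.Nonempty := by
    intro ρ c hcmem
    have hcyc := (Equiv.Perm.mem_cycleFactorsFinset_iff.mp hcmem).1
    rw [Finset.nonempty_iff_ne_empty, Ne, Equiv.Perm.support_eq_empty_iff]
    exact hcyc.ne_one
  have hsub : ∀ {ρ : Equiv.Perm α} (c : Equiv.Perm α), c ∈ ρ.cycleFactorsFinset →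
      ∀ x ∈ c.support, x ∈ ρ.support ∧ c = ρ.cycleOf x := by
    intro ρ c hcmem x hx
    have hcx : c = ρ.cycleOf x := Equiv.Perm.cycle_is_cycleOf hx hcmem
    refine ⟨?_, hcx⟩
    have := Equiv.Perm.support_cycleOf_le ρ x
    exact this (hcx ▸ hx)
  have hsupp : ∀ (c : Equiv.Perm α) (h : c ∈ σ.cycleFactorsFinset),
      c.support = (τ.cycleOf ((hne c h).choose)).support := by
    intro c h
    obtain ⟨_, hcx⟩ := hsub c h _ (hne c h).choose_spec
    calc c.support = (σ.cycleOf ((hne c h).choose)).support := congrArg _ hcx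
      _ = _ := key _
  rw [hsignprod σ, hsignprod τ]
  refine Finset.prod_bij (fun c hcmem => τ.cycleOf ((hne c hcmem).choose)) ?_ ?_ ?_ ?_
  · intro c hcmem
    obtain ⟨hxs, _⟩ := hsub c hcmem _ (hne c hcmem).choose_spec
    exact Equiv.Perm.cycleOf_mem_cycleFactorsFinset_iff.mpr (hs ▸ hxs)
  · intro c1 h1 c2 h2 heq
    have hss : c1.support = c2.support := by
      rw [hsupp c1 h1, hsupp c2 h2, heq]
    have hx2' : (hne c2 h2).choose ∈ c1.support := by
      rw [hss]; exact (hne c2 h2).choose_spec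
    obtain ⟨_, hc1'⟩ := hsub c1 h1 _ hx2'
    obtain ⟨_, hc2'⟩ := hsub c2 h2 _ (hne c2 h2).choose_spec
    rw [hc1', ← hc2']
  · intro c' hc'
    obtain ⟨hy, hcy⟩ := hsub c' hc' _ (hne c' hc').choose_spec
    have hyσ : (hne c' hc').choose ∈ σ.support := hs ▸ hy
    have hcmem : σ.cycleOf ((hne c' hc').choose) ∈ σ.cycleFactorsFinset :=
      Equiv.Perm.cycleOf_mem_cycleFactorsFinset_iff.mpr hyσ
    refine ⟨σ.cycleOf ((hne c' hc').choose), hcmem, ?_⟩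
    have hx0 := (hne (σ.cycleOf ((hne c' hc').choose)) hcmem).choose_spec
    have hx0'' : (hne (σ.cycleOf ((hne c' hc').choose)) hcmem).choose
        ∈ (τ.cycleOf ((hne c' hc').choose)).support := by
      rw [← key]; exact hx0
    have hss' : c'.support = (τ.cycleOf ((hne c' hc').choose)).support :=
      congrArg Equiv.Perm.support hcy
    rw [← hss'] at hx0''
    exact (Equiv.Perm.cycle_is_cycleOf hx0'' hc').symm
  · intro c hcmem
    obtain ⟨hxs, hcx⟩ := hsub c hcmem _ (hne c hcmem).choose_spec
    have hxτ : (hne c hcmem).choose ∈ τ.support := hs ▸ hxs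
    have h1 : c.IsCycle := (Equiv.Perm.mem_cycleFactorsFinset_iff.mp hcmem).1
    have h2 : (τ.cycleOf ((hne c hcmem).choose)).IsCycle :=
      Equiv.Perm.isCycle_cycleOf τ (Equiv.Perm.mem_support.mp hxτ)
    rw [h1.sign, h2.sign]
    exact congrArg (fun s : Finset α => -(-1 : ℤˣ) ^ s.card) (hsupp c hcmem)

namespace PeriodicGraph

variable {d n : ℕ}

/-- The adjacency relation on the fundamental domain read off from a monomial
`μ` in the edge variables. -/
def rel (G : PeriodicGraph d n) (μ : G.VarIdx →₀ ℕ) (u v : Fin n) : Prop :=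
  u ≠ v ∧ ∃ (a : Fin d → ℤ) (h : a ∈ G.edges u v), μ (G.edgeVar u v a h) ≠ 0

lemma realizer_structure (G : PeriodicGraph d n) (σ : Equiv.Perm (Fin n))
    (p : ∀ i ∈ (Finset.univ : Finset (Fin n)), G.TIx i (σ i))
    (hp : p ∈ G.choices σ) (r : G.Mon) (htot : G.tot σ p = r) :
    (∀ u, u ∈ σ.support ↔ ∃ v, G.rel r.2.2 u v) ∧
    (∀ u v, σ.SameCycle u v ↔ Relation.EqvGen (G.rel r.2.2) u v) := by
  set μ := r.2.2 with hμdef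
  have hμ : ∀ w, μ w = ∑ x ∈ Finset.univ.attach,
      ((G.texp x.1 (σ x.1) (p x.1 x.2)).2.2) w := by
    intro w
    have h2 : μ = ∑ x ∈ Finset.univ.attach, (G.texp x.1 (σ x.1) (p x.1 x.2)).2.2 := by
      rw [hμdef, ← htot]
      unfold tot
      rw [Prod.snd_sum, Prod.snd_sum]
    rw [h2, Finset.sum_apply']
  have hmem := Finset.mem_pi.mp hp
  -- each moving row chooses a cross edge
  have hcase : ∀ i : Fin n, σ i ≠ i →
      ∃ (a : Fin d → ℤ) (ha : a ∈ G.edges i (σ i)),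
        p i (Finset.mem_univ i) = Sum.inr ⟨a, ha⟩ := by
    intro i hne
    have hmem' := hmem i (Finset.mem_univ i)
    unfold tset at hmem'
    rcases Finset.mem_union.mp hmem' with h1 | h2
    · rw [if_neg (fun hij => hne hij.symm)] at h1
      exact absurd h1 (Finset.notMem_empty _)
    · obtain ⟨a, _, ha⟩ := Finset.mem_map.mp h2
      exact ⟨a.1, a.2, by rw [← ha]; rfl⟩
  -- forward step
  have hstep : ∀ u, σ u ≠ u → G.rel μ u (σ u) := by
    intro u hne
    obtain ⟨a, ha, hpu⟩ := hcase u hne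
    refine ⟨fun h => hne h.symm, a, ha, ?_⟩
    rw [hμ]
    have hterm : ((G.texp u (σ u) (p u (Finset.mem_univ u))).2.2)
        (G.edgeVar u (σ u) a ha) = 1 := by
      rw [hpu]
      exact Finsupp.single_eq_same
    have hle : 1 ≤ ∑ x ∈ Finset.univ.attach,
        ((G.texp x.1 (σ x.1) (p x.1 x.2)).2.2) (G.edgeVar u (σ u) a ha) := by
      rw [← hterm]
      exact Finset.single_le_sum (f := fun x : {x // x ∈ Finset.univ} =>
        ((G.texp x.1 (σ x.1) (p x.1 x.2)).2.2) (G.edgeVar u (σ u) a ha))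
        (fun _ _ => Nat.zero_le _) (Finset.mem_attach _ ⟨u, Finset.mem_univ u⟩)
    omega
  -- backwards: the relation only joins `u` to `σ u` or `σ⁻¹ u`
  have hback : ∀ u v, G.rel μ u v → σ u = v ∨ σ v = u := by
    intro u v hrel
    obtain ⟨hne, a, ha, hval⟩ := hrel
    rw [hμ] at hval
    have hex : ∃ x ∈ Finset.univ.attach,
        ((G.texp x.1 (σ x.1) (p x.1 x.2)).2.2) (G.edgeVar u v a ha) ≠ 0 := by
      by_contra hall
      push_neg at hall
      exact hval (Finset.sum_eq_zero hall)
    obtain ⟨x, -, hx⟩ := hex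
    rcases hEq : p x.1 x.2 with b | c
    · rw [hEq] at hx
      rcases b
      · -- v-term
        unfold texp at hx
        rw [Finsupp.single_apply, if_neg (by exact fun h => Sum.inl_ne_inr h)] at hx
        exact absurd rfl hx
      · -- λ-term
        unfold texp at hx
        exact absurd rfl hx
    · rw [hEq] at hx
      unfold texp at hx
      have heq : G.edgeVar x.1 (σ x.1) c.1 c.2 = G.edgeVar u v a ha := by
        by_contra hne2
        rw [Finsupp.single_apply, if_neg hne2] at hx
        exact absurd rfl hx
      unfold edgeVar at heq
      have heq2 := Sum.inr_injective heq
      have hr := Quotient.exact heq2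
      rcases hr with h1 | h1
      · have hu : u = x.1 := congrArg (fun t : G.DirEdge => t.val.1) h1
        have hv : v = σ x.1 := congrArg (fun t : G.DirEdge => t.val.2.1) h1
        left
        rw [hu, hv]
      · have hu : u = σ x.1 := congrArg (fun t : G.DirEdge => t.val.1) h1
        have hv : v = x.1 := congrArg (fun t : G.DirEdge => t.val.2.1) h1
        right
        rw [hu, hv]
  constructor
  · intro u
    constructor
    · intro hu
      exact ⟨σ u, hstep u (Equiv.Perm.mem_support.mp hu)⟩
    · rintro ⟨v, hrel⟩
      rcases hback u v hrel with h | h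
      · exact Equiv.Perm.mem_support.mpr (fun hfix => hrel.1 (by rw [← h, hfix]))
      · have hv : v ∈ σ.support := by
          refine Equiv.Perm.mem_support.mpr (fun hfix => ?_)
          rw [hfix] at h
          exact hrel.1 h.symm
        have := Equiv.Perm.apply_mem_support.mpr hv
        rw [h] at this
        exact this
  · intro u v
    constructor
    · rintro ⟨k, hk⟩
      rw [← hk]
      clear hk
      induction k using Int.induction_on with
      | zero => simpa using Relation.EqvGen.refl u
      | succ k ih =>
        have hkk : (σ ^ ((k : ℤ) + 1)) u = σ ((σ ^ (k : ℤ)) u) := by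
          rw [add_comm, zpow_one_add]
          rfl
        rw [hkk]
        by_cases hw : σ ((σ ^ (k : ℤ)) u) = (σ ^ (k : ℤ)) u
        · rw [hw]; exact ih
        · exact Relation.EqvGen.trans _ _ _ ih
            (Relation.EqvGen.rel _ _ (hstep _ hw))
      | pred k ih =>
        have hs : σ ((σ ^ (-(k : ℤ) - 1)) u) = (σ ^ (-(k : ℤ))) u := by
          rw [← Equiv.Perm.mul_apply, ← zpow_one_add]
          norm_num
        by_cases hw : σ ((σ ^ (-(k : ℤ) - 1)) u) = (σ ^ (-(k : ℤ) - 1)) u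
        · have : (σ ^ (-(k : ℤ) - 1)) u = (σ ^ (-(k : ℤ))) u := by
            rw [← hs, hw]
          rw [this]; exact ih
        · have hrel := hstep _ hw
          rw [hs] at hrel
          exact Relation.EqvGen.trans _ _ _ ih
            (Relation.EqvGen.symm _ _ (Relation.EqvGen.rel _ _ (by
              have := hstep _ hw
              rwa [hs] at this)))
    · intro h
      induction h with
      | rel x y hxy =>
        rcases hback x y hxy with h | h
        · exact ⟨1, by simpa using h⟩
        · exact (Equiv.Perm.SameCycle.symm ⟨1, by simpa using h⟩)
      | refl x => exact Equiv.Perm.SameCycle.refl σ x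
      | symm x y _ ih => exact ih.symm
      | trans x y z _ _ ih1 ih2 => exact ih1.trans ih2

lemma sign_uniform (G : PeriodicGraph d n) (r : G.Mon) (σ τ : Equiv.Perm (Fin n))
    (hσ : G.ncount σ r ≠ 0) (hτ : G.ncount τ r ≠ 0) :
    Equiv.Perm.sign σ = Equiv.Perm.sign τ := by
  obtain ⟨p, hp⟩ := Finset.card_ne_zero.mp hσ
  obtain ⟨q, hq⟩ := Finset.card_ne_zero.mp hτ
  rw [Finset.mem_filter] at hp hq
  obtain ⟨hσstruct1, hσstruct2⟩ := G.realizer_structure σ p hp.1 r hp.2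
  obtain ⟨hτstruct1, hτstruct2⟩ := G.realizer_structure τ q hq.1 r hq.2
  apply PeriodicGraph.sign_eq_of_sameCycle
  · ext u
    rw [hσstruct1 u, hτstruct1 u]
  · intro x y
    rw [hσstruct2 x y, hτstruct2 x y]

end PeriodicGraph
namespace PeriodicGraph

variable {d n : ℕ}

/-- Specialization of the universal coefficients at a labeling `x`. -/
def evalHom (G : PeriodicGraph d n) (x : G.Labeling) : G.LaurentU →+* LaurentC d :=
  AddMonoidAlgebra.liftNCRingHom
    ((AddMonoidAlgebra.singleZeroRingHom).comp (MvPolynomial.eval x))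
    (AddMonoidAlgebra.of ℂ (Fin d → ℤ)) (fun _ _ => Commute.all _ _)

lemma evalHom_single (G : PeriodicGraph d n) (x : G.Labeling) (a : Fin d → ℤ)
    (c : MvPolynomial G.VarIdx ℂ) :
    G.evalHom x (AddMonoidAlgebra.single a c)
      = AddMonoidAlgebra.single a (MvPolynomial.eval x c) := by
  have h1 : G.evalHom x (AddMonoidAlgebra.single a c)
      = (AddMonoidAlgebra.singleZeroRingHom.comp (MvPolynomial.eval x)) c *
        (AddMonoidAlgebra.of ℂ (Fin d → ℤ)) (Multiplicative.ofAdd a) :=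
    AddMonoidAlgebra.liftNC_single _ _ _ _
  rw [h1]
  show AddMonoidAlgebra.single 0 (MvPolynomial.eval x c) *
      AddMonoidAlgebra.single a (1 : ℂ) = _
  rw [AddMonoidAlgebra.single_mul_single, zero_add, mul_one]

lemma evalHom_apply (G : PeriodicGraph d n) (x : G.Labeling) (g : G.LaurentU)
    (a : Fin d → ℤ) :
    AddMonoidAlgebra.coeff (G.evalHom x g) a = MvPolynomial.eval x (AddMonoidAlgebra.coeff g a) := by
  induction g using AddMonoidAlgebra.induction_linear with
  | zero => simp
  | add f g hf hg =>
    rw [map_add, AddMonoidAlgebra.coeff_add, AddMonoidAlgebra.coeff_add, Finsupp.add_apply,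
      Finsupp.add_apply, hf, hg, map_add]
  | single b c =>
    rw [G.evalHom_single, AddMonoidAlgebra.coeff_single, AddMonoidAlgebra.coeff_single,
      Finsupp.single_apply, Finsupp.single_apply]
    split_ifs
    · rfl
    · rw [map_zero]

lemma map_floquetU (G : PeriodicGraph d n) (x : G.Labeling) (i j : Fin n) :
    G.evalHom x (G.floquetU i j) = G.floquet x i j := by
  unfold floquetU floquet
  rw [map_add, map_sum]
  congr 1
  · split_ifs with h
    · rw [G.evalHom_single, MvPolynomial.eval_X]
    · exact map_zero _
  · exact Finset.sum_congr rfl (fun a _ => by rw [G.evalHom_single, MvPolynomial.eval_X])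

lemma map_dispMatU (G : PeriodicGraph d n) (x : G.Labeling) (i j : Fin n) :
    (G.dispMatU i j).map (G.evalHom x) = G.dispMat x i j := by
  unfold dispMatU dispMat
  rw [Polynomial.map_sub, Polynomial.map_C, G.map_floquetU]
  congr 1
  split_ifs
  · exact Polynomial.map_X _
  · exact Polynomial.map_zero _

lemma map_permProdU (G : PeriodicGraph d n) (x : G.Labeling) (σ : Equiv.Perm (Fin n)) :
    (G.permProdU σ).map (G.evalHom x) = G.permProd x σ := by
  unfold permProdU permProd
  rw [Polynomial.map_prod]
  exact Finset.prod_congr rfl (fun i _ => G.map_dispMatU x i (σ i))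

lemma coeff_permProd (G : PeriodicGraph d n) (x : G.Labeling) (σ : Equiv.Perm (Fin n))
    (b : ℕ) (a : Fin d → ℤ) :
    AddMonoidAlgebra.coeff ((G.permProd x σ).coeff b) a = MvPolynomial.eval x (AddMonoidAlgebra.coeff ((G.permProdU σ).coeff b) a) := by
  rw [← G.map_permProdU x σ, Polynomial.coeff_map, G.evalHom_apply]

end PeriodicGraph

open PeriodicGraph in
/-- Let `w ≠ 0` identify a proper face of the generic Newton
polytope `N = N(D(z,λ))` and let `m = min_{a ∈ A(D(z,λ))} w·a`. Then for any
fixed labeling and any permutation `σ`, every exponent vector in the support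
of `σD(z,λ)` has weight at least `m` with respect to `w`. -/
theorem permProd_weight_ge_min {d n : ℕ} (G : PeriodicGraph d n)
    (w : (Fin d → ℤ) × ℤ) (hw : w ≠ 0)
    (hproper : face G.dispU w ≠ newton G.dispU)
    (m : ℤ) (hm : IsLeast (dotZ w '' genSupp G.dispU) m)
    (x : G.Labeling) (σ : Equiv.Perm (Fin n)) :
    ∀ p ∈ suppC (G.permProd x σ), m ≤ dotZ w p := by
  intro pt hpt
  have hne : AddMonoidAlgebra.coeff ((G.permProd x σ).coeff pt.2) pt.1 ≠ 0 := hpt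
  rw [G.coeff_permProd x σ pt.2 pt.1] at hne
  have hUne : AddMonoidAlgebra.coeff ((G.permProdU σ).coeff pt.2) pt.1 ≠ 0 := by
    intro h
    rw [h, map_zero] at hne
    exact hne rfl
  obtain ⟨μ, hμ⟩ := MvPolynomial.ne_zero_iff.mp hUne
  set r : G.Mon := (pt.1, pt.2, μ) with hrdef
  have hco : G.co r (G.permProdU σ) ≠ 0 := hμ
  have hN : G.ncount σ r ≠ 0 := by
    intro h0
    rw [G.co_permProdU, h0] at hco
    simp at hco
  have hD : G.co r G.dispU ≠ 0 :=
    G.co_dispU_ne_zero r σ hN (fun τ hτ => G.sign_uniform r τ σ hτ hN)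
  have hgen : pt ∈ genSupp G.dispU := by
    intro h
    apply hD
    show MvPolynomial.coeff μ (AddMonoidAlgebra.coeff (G.dispU.coeff pt.2) pt.1) = 0
    rw [h]
    exact MvPolynomial.coeff_zero _
  exact hm.2 ⟨pt, hgen, rfl⟩
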